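/- Let X be a compact metric space and f_{0,∞} an equicontinuous sequence of continuous surjective self-maps. Then for every increasing sequence A of nonnegative integers and 0 ≤ i ≤ j, h_A(f_{i,∞}) ≥ h_A(f_{j,∞}); consequently h*(f_{i,∞}) = h*(f_{j,∞}). -/

import Mathlib

open Filter Set MeasureTheory

/-- `nacomp f i n = f (i+n-1) ∘ ⋯ ∘ f i`, the `n`-fold composition of the
nonautonomous system starting at index `i`. -/
def nacomp {X : Type*} (f : ℕ → X → X) (i : ℕ) : ℕ → X → X
  | 0 => id
  | n + 1 => f (i + n) ∘ nacomp f i n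

/-- `E` is an `(n, ε, A)`-separated subset of `Λ` for the nonautonomous system `f`. -/
def IsSepSet {X : Type*} [PseudoMetricSpace X] (f : ℕ → X → X) (A : ℕ → ℕ) (n : ℕ)
    (ε : ℝ) (Λ : Set X) (E : Finset X) : Prop :=
  ↑E ⊆ Λ ∧ ∀ x ∈ E, ∀ y ∈ E, x ≠ y →
    ∃ j : Fin n, ε < dist (nacomp f 0 (A j) x) (nacomp f 0 (A j) y)

/-- `s_n(ε, A, f, Λ)`: maximal cardinality of an `(n,ε,A)`-separated subset of `Λ`. -/
noncomputable def maxSep {X : Type*} [PseudoMetricSpace X] (f : ℕ → X → X) (A : ℕ → ℕ)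
    (n : ℕ) (ε : ℝ) (Λ : Set X) : ℕ :=
  sSup {m | ∃ E : Finset X, IsSepSet f A n ε Λ E ∧ E.card = m}

/-- Topological sequence entropy of `f` on `Λ` along `A`, via separated sets:
`lim_{ε → 0} limsup_n (1/n) log s_n(ε,A,f,Λ)`, the limit realized as a supremum over `ε > 0`. -/
noncomputable def sepEnt {X : Type*} [PseudoMetricSpace X] (f : ℕ → X → X) (A : ℕ → ℕ)
    (Λ : Set X) : EReal :=
  ⨆ ε : {ε : ℝ // 0 < ε},
    limsup (fun n : ℕ => ((Real.log (maxSep f A n ε Λ) / n : ℝ) : EReal)) atTop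

/-- A finite open cover of the whole space. -/
def IsFinOpenCover {X : Type*} [TopologicalSpace X] (𝒜 : Finset (Set X)) : Prop :=
  (∀ u ∈ 𝒜, IsOpen u) ∧ ⋃₀ ↑𝒜 = (univ : Set X)

/-- A cell `⋂_j (f_0^{a_j})⁻¹ (u j)` of the join `⋁_{j} f_0^{-a_j} 𝒜`. -/
def seqCell {X : Type*} (f : ℕ → X → X) (A : ℕ → ℕ) (n : ℕ) (u : Fin n → Set X) : Set X :=
  ⋂ j : Fin n, nacomp f 0 (A j.1) ⁻¹' (u j)

/-- `N((⋁_{j=1}^n f_0^{-a_j} 𝒜)|_Λ)`: the minimal cardinality of a subfamily of the join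
cover whose union contains `Λ`. -/
noncomputable def coverN {X : Type*} (f : ℕ → X → X) (A : ℕ → ℕ) (n : ℕ) (Λ : Set X)
    (𝒜 : Finset (Set X)) : ℕ :=
  sInf {m | ∃ S : Finset (Fin n → Set X), (∀ u ∈ S, ∀ j, u j ∈ 𝒜) ∧
    (Λ ⊆ ⋃ u ∈ S, seqCell f A n u) ∧ S.card = m}

/-- `h_A(f, Λ, 𝒜)`, the sequence entropy of `f` on `Λ` relative to the open cover `𝒜`. -/
noncomputable def coverEntOf {X : Type*} (f : ℕ → X → X) (A : ℕ → ℕ) (Λ : Set X)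
    (𝒜 : Finset (Set X)) : EReal :=
  limsup (fun n : ℕ => ((Real.log (coverN f A n Λ 𝒜) / n : ℝ) : EReal)) atTop

/-- `h_A(f, Λ)`: topological sequence entropy via open covers. -/
noncomputable def coverEnt {X : Type*} [TopologicalSpace X] (f : ℕ → X → X) (A : ℕ → ℕ)
    (Λ : Set X) : EReal :=
  ⨆ 𝒜 : {𝒜 : Finset (Set X) // IsFinOpenCover 𝒜}, coverEntOf f A Λ 𝒜

/-- The supremum topological sequence entropy `h*(f) = sup_A h_A(f)`. -/
noncomputable def supSeqEnt {X : Type*} [PseudoMetricSpace X] (f : ℕ → X → X) : EReal :=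
  ⨆ A : {A : ℕ → ℕ // StrictMono A}, sepEnt f A univ

/-- The `n`-th compositions system `f_{0,∞}^n`, whose `k`-th map is `f_{kn}^n`. -/
def compSys {X : Type*} (f : ℕ → X → X) (n : ℕ) : ℕ → X → X :=
  fun k => nacomp f (k * n) n

/-- A finite measurable partition of the space. -/
def IsFinMeasPartition {X : Type*} [MeasurableSpace X] (P : Finset (Set X)) : Prop :=
  (∀ s ∈ P, MeasurableSet s) ∧ ((P : Set (Set X)).PairwiseDisjoint id) ∧
    ⋃₀ ↑P = (univ : Set X)

/-- `h_{A,μ}(f, P) = limsup (1/n) H_μ(⋁_{j=1}^n f_0^{-a_j} P)`. -/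
noncomputable def measSeqEntPart {X : Type*} [MeasurableSpace X] (μ : Measure X)
    (f : ℕ → X → X) (A : ℕ → ℕ) (P : Finset (Set X)) : EReal :=
  limsup (fun n : ℕ =>
    (((∑ u : Fin n → {s // s ∈ P},
        Real.negMulLog (μ (seqCell f A n (fun j => (u j : Set X)))).toReal) / n : ℝ) : EReal))
    atTop

/-- The measure-theoretic sequence entropy `h_{A,μ}(f)`. -/
noncomputable def measSeqEnt {X : Type*} [MeasurableSpace X] (μ : Measure X)
    (f : ℕ → X → X) (A : ℕ → ℕ) : EReal :=
  ⨆ P : {P : Finset (Set X) // IsFinMeasPartition P}, measSeqEntPart μ f A P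

/-- Covering dimension at most `d`: every finite open cover has a finite open refinement
of order at most `d + 1`. -/
def HasCovDimLE (X : Type*) [TopologicalSpace X] (d : ℕ) : Prop :=
  ∀ 𝒜 : Finset (Set X), IsFinOpenCover 𝒜 → ∃ ℬ : Finset (Set X), IsFinOpenCover ℬ ∧
    (∀ v ∈ ℬ, ∃ u ∈ 𝒜, v ⊆ u) ∧ ∀ x : X, ({v : Set X | v ∈ ℬ ∧ x ∈ v}).ncard ≤ d + 1

/-- The induced nonautonomous system `f̂` on the space of Borel probability measures,
carrying the Lévy–Prokhorov (Prohorov) metric: `f̂ n μ = (f n)_* μ`. -/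
noncomputable def inducedSys {X : Type*} [MeasurableSpace X] (f : ℕ → X → X)
    (hf : ∀ n, Measurable (f n)) :
    ℕ → LevyProkhorov (ProbabilityMeasure X) → LevyProkhorov (ProbabilityMeasure X) :=
  fun n μ => (LevyProkhorov.toMeasureEquiv (α := ProbabilityMeasure X)).symm
    (((LevyProkhorov.toMeasureEquiv (α := ProbabilityMeasure X)) μ).map (hf n).aemeasurable)

/-- Multi-sensitivity of a nonautonomous system. -/
def MultiSensitive {X : Type*} [PseudoMetricSpace X] (f : ℕ → X → X) : Prop :=
  ∃ δ : ℝ, 0 < δ ∧ ∀ (k : ℕ) (V : Fin k → Set X),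
    (∀ i, IsOpen (V i)) → (∀ i, (V i).Nonempty) →
      ∃ n : ℕ, 1 ≤ n ∧ ∀ i, δ < Metric.diam (nacomp f 0 n '' V i)

section AuxLemmas

variable {X : Type*}

lemma nacomp_congr (f g : ℕ → X → X) (i k n : ℕ) (h : ∀ m, m < n → f (i + m) = g (k + m)) :
    nacomp f i n = nacomp g k n := by
  induction n with
  | zero => rfl
  | succ n ih =>
    show f (i + n) ∘ nacomp f i n = g (k + n) ∘ nacomp g k n
    rw [ih fun m hm => h m (hm.trans (Nat.lt_succ_self n)), h n (Nat.lt_succ_self n)]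

lemma nacomp_succ' (f : ℕ → X → X) (i n : ℕ) :
    nacomp f i (n + 1) = nacomp f (i + 1) n ∘ f i := by
  induction n with
  | zero =>
    show f (i + 0) ∘ id = id ∘ f i
    simp
  | succ n ih =>
    show f (i + (n + 1)) ∘ nacomp f i (n + 1) = (f (i + 1 + n) ∘ nacomp f (i + 1) n) ∘ f i
    rw [ih, show i + (n + 1) = i + 1 + n by omega]
    rfl

lemma nacomp_add (f : ℕ → X → X) (i a b : ℕ) :
    nacomp f i (a + b) = nacomp f (i + a) b ∘ nacomp f i a := by
  induction b with
  | zero => rfl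
  | succ b ih =>
    show f (i + (a + b)) ∘ nacomp f i (a + b) = (f (i + a + b) ∘ nacomp f (i + a) b) ∘ nacomp f i a
    rw [ih, show i + (a + b) = i + a + b by omega]
    rfl

lemma isSepSet_empty [PseudoMetricSpace X] (f : ℕ → X → X) (A : ℕ → ℕ) (n : ℕ) (ε : ℝ)
    (Λ : Set X) : IsSepSet f A n ε Λ (∅ : Finset X) := by
  constructor
  · simp
  · intro x hx
    simp at hx

lemma sepSet_card_bdd [MetricSpace X] [CompactSpace X] (f : ℕ → X → X) (A : ℕ → ℕ)
    (n : ℕ) {ε : ℝ} (hε : 0 < ε) (Λ : Set X) :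
    BddAbove {m | ∃ E : Finset X, IsSepSet f A n ε Λ E ∧ E.card = m} := by
  classical
  obtain ⟨t, -, htf, htcov⟩ := finite_cover_balls_of_compact (isCompact_univ : IsCompact (univ : Set X)) (half_pos hε)
  have hch : ∀ (x : X) (m : Fin n), ∃ c : {y // y ∈ htf.toFinset},
      dist (nacomp f 0 (A m) x) (c : X) < ε / 2 := by
    intro x m
    have h := htcov (mem_univ (nacomp f 0 (A m) x))
    simp only [mem_iUnion] at h
    obtain ⟨c, hc, hcb⟩ := h
    exact ⟨⟨c, htf.mem_toFinset.2 hc⟩, Metric.mem_ball.1 hcb⟩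
  choose c hc using hch
  refine ⟨Fintype.card (Fin n → {y // y ∈ htf.toFinset}), ?_⟩
  rintro m ⟨E, hE, rfl⟩
  have hinj : Set.InjOn c ↑E := by
    intro x hx y hy hxy
    by_contra hne
    obtain ⟨m, hm⟩ := hE.2 x (by exact_mod_cast hx) y (by exact_mod_cast hy) hne
    have h1 := hc x m
    have h2 := hc y m
    rw [hxy] at h1
    have hlt : dist (nacomp f 0 (A m) x) (nacomp f 0 (A m) y) < ε := by
      calc dist (nacomp f 0 (A m) x) (nacomp f 0 (A m) y)
          ≤ dist (nacomp f 0 (A m) x) (c y m : X) + dist (nacomp f 0 (A m) y) (c y m : X) :=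
            dist_triangle_right _ _ _
        _ < ε / 2 + ε / 2 := add_lt_add h1 h2
        _ = ε := add_halves ε
    exact absurd hm (not_lt.2 hlt.le)
  calc E.card ≤ (Finset.univ : Finset (Fin n → {y // y ∈ htf.toFinset})).card :=
        Finset.card_le_card_of_injOn c (fun _ _ => Finset.mem_univ _) hinj
    _ = Fintype.card (Fin n → {y // y ∈ htf.toFinset}) := Finset.card_univ

lemma zero_mem_sepSet_cards [PseudoMetricSpace X] (f : ℕ → X → X) (A : ℕ → ℕ) (n : ℕ) (ε : ℝ)
    (Λ : Set X) : 0 ∈ {m | ∃ E : Finset X, IsSepSet f A n ε Λ E ∧ E.card = m} :=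
  ⟨∅, isSepSet_empty f A n ε Λ, rfl⟩

lemma maxSep_le_maxSep [MetricSpace X] [CompactSpace X]
    {f₁ f₂ : ℕ → X → X} {A₁ A₂ : ℕ → ℕ} {n : ℕ} {ε₁ ε₂ : ℝ} (hε₂ : 0 < ε₂) {Λ₁ Λ₂ : Set X}
    (h : ∀ E : Finset X, IsSepSet f₁ A₁ n ε₁ Λ₁ E →
      ∃ E' : Finset X, IsSepSet f₂ A₂ n ε₂ Λ₂ E' ∧ E'.card = E.card) :
    maxSep f₁ A₁ n ε₁ Λ₁ ≤ maxSep f₂ A₂ n ε₂ Λ₂ := by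
  apply csSup_le_csSup (sepSet_card_bdd f₂ A₂ n hε₂ Λ₂)
    ⟨0, zero_mem_sepSet_cards f₁ A₁ n ε₁ Λ₁⟩
  rintro m ⟨E, hE, rfl⟩
  obtain ⟨E', hE', hcard⟩ := h E hE
  exact ⟨E', hE', hcard⟩

lemma one_le_maxSep [MetricSpace X] [CompactSpace X] [Nonempty X] (f : ℕ → X → X)
    (A : ℕ → ℕ) (n : ℕ) {ε : ℝ} (hε : 0 < ε) :
    1 ≤ maxSep f A n ε (univ : Set X) := by
  apply le_csSup (sepSet_card_bdd f A n hε univ)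
  refine ⟨{Classical.arbitrary X}, ⟨subset_univ _, ?_⟩, Finset.card_singleton _⟩
  intro x hx y hy hxy
  simp only [Finset.mem_singleton] at hx hy
  exact absurd (hx.trans hy.symm) hxy

lemma log_nat_mono {m k : ℕ} (h : m ≤ k) : Real.log m ≤ Real.log k := by
  rcases Nat.eq_zero_or_pos m with h0 | h1
  · simp only [h0, Nat.cast_zero, Real.log_zero]
    exact Real.log_natCast_nonneg k
  · exact Real.log_le_log (by exact_mod_cast h1) (by exact_mod_cast h)

lemma logdiv_mono {m₁ m₂ n : ℕ} (h : m₁ ≤ m₂) :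
    ((Real.log m₁ / n : ℝ) : EReal) ≤ ((Real.log m₂ / n : ℝ) : EReal) := by
  apply EReal.coe_le_coe_iff.2
  rw [div_eq_mul_inv, div_eq_mul_inv]
  exact mul_le_mul_of_nonneg_right (log_nat_mono h) (inv_nonneg.2 (Nat.cast_nonneg n))

lemma supSeqEnt_of_isEmpty [MetricSpace X] [IsEmpty X] (g : ℕ → X → X) :
    supSeqEnt g = 0 := by
  haveI : Nonempty {ε : ℝ // 0 < ε} := ⟨⟨1, one_pos⟩⟩
  haveI : Nonempty {A : ℕ → ℕ // StrictMono A} := ⟨⟨id, strictMono_id⟩⟩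
  have hms : ∀ (A : ℕ → ℕ) (n : ℕ) (ε : ℝ), maxSep g A n ε univ = 0 := by
    intro A n ε
    have hset : {m | ∃ E : Finset X, IsSepSet g A n ε univ E ∧ E.card = m} = {0} := by
      ext m
      constructor
      · rintro ⟨E, -, rfl⟩
        simp [Finset.eq_empty_of_isEmpty E]
      · rintro rfl
        exact zero_mem_sepSet_cards g A n ε univ
    rw [maxSep, hset, csSup_singleton]
  unfold supSeqEnt sepEnt
  simp only [hms, Nat.cast_zero, Real.log_zero, zero_div, EReal.coe_zero]
  simp only [limsup_const, iSup_const]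

end AuxLemmas

section MainLemmas

variable {X : Type*}

lemma sepEnt_shift_one [MetricSpace X] [CompactSpace X]
    (f : ℕ → X → X) (hequi : Equicontinuous f) (hsurj : ∀ n, Function.Surjective (f n))
    (k : ℕ) (A : ℕ → ℕ) :
    sepEnt (fun n => f (k + 1 + n)) A univ ≤ sepEnt (fun n => f (k + n)) A univ := by
  classical
  have EC := Metric.uniformEquicontinuous_iff.1
    (CompactSpace.uniformEquicontinuous_of_equicontinuous hequi)
  refine iSup_le ?_
  rintro ⟨ε, hε⟩
  obtain ⟨δ, hδ, hδε⟩ := EC ε hε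
  refine le_iSup_of_le ⟨δ / 2, half_pos hδ⟩
    (Filter.limsup_le_limsup (Filter.Eventually.of_forall fun n => ?_))
  refine logdiv_mono ?_
  set ℓ : X → X := Function.surjInv (hsurj k) with hℓ
  have hfk : ∀ x, f k (ℓ x) = x := fun x => Function.surjInv_eq (hsurj k) x
  have hinj : Function.Injective ℓ := fun a b hab => by rw [← hfk a, ← hfk b, hab]
  have key : ∀ (a : ℕ) (x : X),
      nacomp (fun n => f (k + 1 + n)) 0 a x = nacomp (fun n => f (k + n)) 0 (a + 1) (ℓ x) := by
    intro a x
    have h1 : nacomp (fun n : ℕ => f (k + 1 + n)) 0 a = nacomp (fun n : ℕ => f (k + n)) 1 a :=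
      nacomp_congr _ _ _ _ _ fun m _ => congrArg f (by omega)
    rw [nacomp_succ', h1]
    simp only [Function.comp_apply]
    congr 1
    show x = f (k + 0) (ℓ x)
    rw [Nat.add_zero, hfk]
  apply maxSep_le_maxSep (half_pos hδ)
  intro E hE
  refine ⟨E.image ℓ, ⟨subset_univ _, ?_⟩, Finset.card_image_of_injective E hinj⟩
  intro a ha b hb hab
  obtain ⟨x, hx, rfl⟩ := Finset.mem_image.1 ha
  obtain ⟨y, hy, rfl⟩ := Finset.mem_image.1 hb
  have hxy : x ≠ y := fun h => hab (by rw [h])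
  obtain ⟨m, hm⟩ := hE.2 x hx y hy hxy
  refine ⟨m, ?_⟩
  rw [key, key] at hm
  have hstep : ∀ z : X, nacomp (fun n => f (k + n)) 0 (A m + 1) z
      = f (k + A m) (nacomp (fun n => f (k + n)) 0 (A m) z) := by
    intro z
    show f (k + (0 + A m)) (nacomp (fun n => f (k + n)) 0 (A m) z) = _
    rw [Nat.zero_add]
  by_contra hcon
  push_neg at hcon
  have hlt := hδε _ _ (lt_of_le_of_lt hcon (by linarith)) (k + A m)
  rw [hstep, hstep] at hm
  exact absurd hm (not_lt.2 hlt.le)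

lemma sepEnt_le_supSeqEnt_shift [MetricSpace X] [CompactSpace X] [Nonempty X]
    (f : ℕ → X → X) (i j : ℕ) (hij : i ≤ j) (A : ℕ → ℕ) (hA : StrictMono A) :
    sepEnt (fun n => f (i + n)) A univ ≤ supSeqEnt (fun n => f (j + n)) := by
  classical
  obtain ⟨d, rfl⟩ : ∃ d, j = i + d := ⟨j - i, by omega⟩
  set Fi := fun n => f (i + n) with hFi
  set Fj := fun n => f (i + d + n) with hFj
  have hdmem : d ∈ {m | d ≤ A m} := hA.le_apply
  obtain ⟨r, hrd, hlarge, hsmall⟩ : ∃ r, r ≤ d ∧ (∀ m, r ≤ m → d ≤ A m) ∧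
      (∀ m, m < r → A m < d) := by
    refine ⟨sInf {m | d ≤ A m}, Nat.sInf_le hdmem, ?_, ?_⟩
    · intro m hm
      have hmem : d ≤ A (sInf {m | d ≤ A m}) :=
        Nat.sInf_mem (⟨d, hdmem⟩ : Set.Nonempty {m | d ≤ A m})
      exact le_trans hmem (hA.monotone hm)
    · intro m hm
      by_contra h
      push_neg at h
      exact absurd (Nat.sInf_le (show m ∈ {m | d ≤ A m} from h)) (not_le.2 hm)
  set B := fun m => A (m + r) - d with hB
  have hBmono : StrictMono B := by
    intro a b hab
    have h1 : d ≤ A (a + r) := hlarge _ (Nat.le_add_left r a)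
    have h2 : A (a + r) < A (b + r) := hA (by omega)
    show A (a + r) - d < A (b + r) - d
    omega
  set π := nacomp Fi 0 d with hπ
  have hcomm : ∀ a, d ≤ a → ∀ x : X, nacomp Fi 0 a x = nacomp Fj 0 (a - d) (π x) := by
    intro a ha x
    have h1 : nacomp Fi 0 a = nacomp Fi 0 (d + (a - d)) := by
      rw [Nat.add_sub_cancel' ha]
    have h3 : nacomp Fi (0 + d) (a - d) = nacomp Fj 0 (a - d) :=
      nacomp_congr _ _ _ _ _ fun m _ => congrArg f (by omega)
    rw [h1, nacomp_add, h3]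
    rfl
  refine iSup_le ?_
  rintro ⟨ε, hε⟩
  obtain ⟨t, -, htf, htcov⟩ := finite_cover_balls_of_compact (isCompact_univ : IsCompact (univ : Set X)) (half_pos hε)
  set T := htf.toFinset with hT
  have hTne : T.Nonempty := by
    have h := htcov (mem_univ (Classical.arbitrary X))
    simp only [mem_iUnion] at h
    obtain ⟨c, hc, -⟩ := h
    exact ⟨c, htf.mem_toFinset.2 hc⟩
  have hN1 : 1 ≤ T.card := Finset.card_pos.2 hTne
  have hch : ∀ (x : X) (m : Fin r), ∃ cm : {y // y ∈ T},
      dist (nacomp Fi 0 (A m) x) (cm : X) < ε / 2 := by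
    intro x m
    have h := htcov (mem_univ (nacomp Fi 0 (A m) x))
    simp only [mem_iUnion] at h
    obtain ⟨c, hc, hcb⟩ := h
    exact ⟨⟨c, htf.mem_toFinset.2 hc⟩, Metric.mem_ball.1 hcb⟩
  choose c hc using hch
  -- the key counting estimate
  have key : ∀ n : ℕ, r ≤ n →
      maxSep Fi A n ε univ ≤ maxSep Fj B (n - r) ε univ * T.card ^ r := by
    intro n hn
    apply csSup_le ⟨0, zero_mem_sepSet_cards Fi A n ε univ⟩
    rintro m ⟨E, hE, rfl⟩
    have hsep : ∀ x ∈ E, ∀ y ∈ E, c x = c y → x ≠ y → ∃ m : Fin n, r ≤ (m : ℕ) ∧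
        ε < dist (nacomp Fi 0 (A m) x) (nacomp Fi 0 (A m) y) := by
      intro x hx y hy hcxy hxy
      obtain ⟨m, hm⟩ := hE.2 x hx y hy hxy
      refine ⟨m, ?_, hm⟩
      by_contra hlt
      push_neg at hlt
      have h1 := hc x ⟨(m : ℕ), hlt⟩
      have h2 := hc y ⟨(m : ℕ), hlt⟩
      rw [hcxy] at h1
      have hlt2 : dist (nacomp Fi 0 (A m) x) (nacomp Fi 0 (A m) y) < ε := by
        calc dist (nacomp Fi 0 (A m) x) (nacomp Fi 0 (A m) y)
            ≤ dist (nacomp Fi 0 (A m) x) (c y ⟨(m : ℕ), hlt⟩ : X)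
              + dist (nacomp Fi 0 (A m) y) (c y ⟨(m : ℕ), hlt⟩ : X) := dist_triangle_right _ _ _
          _ < ε / 2 + ε / 2 := add_lt_add h1 h2
          _ = ε := add_halves ε
      exact absurd hm (not_lt.2 hlt2.le)
    have hfiber : ∀ g ∈ E.image c, (E.filter fun x => c x = g).card ≤
        maxSep Fj B (n - r) ε univ := by
      intro g hg
      set F := E.filter fun x => c x = g with hF
      have hmemF : ∀ x ∈ F, x ∈ E ∧ c x = g := by
        intro x hx
        exact Finset.mem_filter.1 hx
      have hsepF : ∀ x ∈ F, ∀ y ∈ F, x ≠ y → ∃ m : Fin n, r ≤ (m : ℕ) ∧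
          ε < dist (nacomp Fi 0 (A m) x) (nacomp Fi 0 (A m) y) := by
        intro x hx y hy hxy
        obtain ⟨hx1, hx2⟩ := hmemF x hx
        obtain ⟨hy1, hy2⟩ := hmemF y hy
        exact hsep x hx1 y hy1 (hx2.trans hy2.symm) hxy
      have hπinj : Set.InjOn π ↑F := by
        intro x hx y hy hxy
        by_contra hne
        obtain ⟨m, hmr, hm⟩ := hsepF x (by exact_mod_cast hx) y (by exact_mod_cast hy) hne
        rw [hcomm _ (hlarge _ hmr) x, hcomm _ (hlarge _ hmr) y, hxy] at hm
        rw [dist_self] at hm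
        exact absurd hm (not_lt.2 hε.le)
      have himg : IsSepSet Fj B (n - r) ε univ (F.image π) := by
        refine ⟨subset_univ _, ?_⟩
        intro a ha b hb hab
        obtain ⟨x, hx, rfl⟩ := Finset.mem_image.1 ha
        obtain ⟨y, hy, rfl⟩ := Finset.mem_image.1 hb
        have hxy : x ≠ y := fun h => hab (by rw [h])
        obtain ⟨m, hmr, hm⟩ := hsepF x hx y hy hxy
        have hmn : (m : ℕ) - r < n - r := by
          have := m.isLt
          omega
        refine ⟨⟨(m : ℕ) - r, hmn⟩, ?_⟩
        rw [hcomm _ (hlarge _ hmr) x, hcomm _ (hlarge _ hmr) y] at hm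
        show ε < dist (nacomp Fj 0 (B ((m : ℕ) - r)) (π x)) (nacomp Fj 0 (B ((m : ℕ) - r)) (π y))
        have hBeq : B ((m : ℕ) - r) = A (m : ℕ) - d := by
          simp only [hB]
          rw [Nat.sub_add_cancel hmr]
        rw [hBeq]
        exact hm
      have hmem2 : (F.image π).card ∈
          {m | ∃ E : Finset X, IsSepSet Fj B (n - r) ε univ E ∧ E.card = m} := ⟨_, himg, rfl⟩
      have hle := le_csSup (sepSet_card_bdd Fj B (n - r) hε univ) hmem2
      rwa [Finset.card_image_of_injOn hπinj] at hle
    have himgcard : (E.image c).card ≤ T.card ^ r := by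
      calc (E.image c).card ≤ (Finset.univ : Finset (Fin r → {y // y ∈ T})).card :=
            Finset.card_le_card (Finset.subset_univ _)
        _ = Fintype.card (Fin r → {y // y ∈ T}) := Finset.card_univ
        _ = T.card ^ r := by
            rw [Fintype.card_fun, Fintype.card_coe, Fintype.card_fin]
    calc E.card ≤ maxSep Fj B (n - r) ε univ * (E.image c).card :=
          Finset.card_le_mul_card_image E _ hfiber
      _ ≤ maxSep Fj B (n - r) ε univ * T.card ^ r :=
          Nat.mul_le_mul_left _ himgcard
  -- analytic part
  set v : ℕ → EReal := fun m => ((Real.log (maxSep Fj B m ε univ) / m : ℝ) : EReal) with hv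
  have hL2 : limsup (fun n : ℕ => v (n - r)) atTop = limsup v atTop := by
    have h := Filter.limsup_nat_add (fun n => v (n - r)) r
    simpa [Nat.add_sub_cancel] using h.symm
  have hfinal : limsup v atTop ≤ supSeqEnt Fj := by
    apply le_trans _ (le_iSup (fun A' : {A : ℕ → ℕ // StrictMono A} =>
      sepEnt Fj A' univ) ⟨B, hBmono⟩)
    exact le_iSup (fun ε' : {ε : ℝ // 0 < ε} =>
      limsup (fun n : ℕ => ((Real.log (maxSep Fj B n ε' univ) / n : ℝ) : EReal)) atTop) ⟨ε, hε⟩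
  refine le_trans ?_ (le_trans hL2.le hfinal)
  -- limsup u ≤ limsup (v ∘ (· - r))
  apply le_of_forall_gt_imp_ge_of_dense
  intro cE hcE
  rcases eq_or_ne cE ⊤ with rfl | hcEtop
  · exact le_top
  have h0L2 : (0 : EReal) ≤ limsup (fun n : ℕ => v (n - r)) atTop := by
    apply le_limsup_of_frequently_le _ (Filter.isBoundedUnder_of ⟨⊤, fun _ => le_top⟩)
    apply Filter.Frequently.of_forall
    intro n
    apply EReal.coe_nonneg.2
    apply div_nonneg (Real.log_natCast_nonneg _) (Nat.cast_nonneg _)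
  have hcE0 : (0 : EReal) < cE := lt_of_le_of_lt h0L2 hcE
  have hcEbot : cE ≠ ⊥ := fun h => by simp [h] at hcE0
  lift cE to ℝ using ⟨hcEtop, hcEbot⟩ with c₀
  obtain ⟨bE, hb1, hb2⟩ := exists_between hcE
  have hbEtop : bE ≠ ⊤ := fun h => by rw [h] at hb2; exact absurd hb2 (not_lt.2 le_top)
  have hbE0 : (0 : EReal) ≤ bE := le_trans h0L2 hb1.le
  have hbEbot : bE ≠ ⊥ := fun h => by simp [h] at hbE0
  lift bE to ℝ using ⟨hbEtop, hbEbot⟩ with b₀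
  have hb₀c₀ : b₀ < c₀ := EReal.coe_lt_coe_iff.1 hb2
  have hev1 : ∀ᶠ n : ℕ in atTop, v (n - r) < (b₀ : EReal) :=
    Filter.eventually_lt_of_limsup_lt hb1
  set C : ℝ := (d : ℝ) * Real.log T.card with hC
  have hev2 : ∀ᶠ n : ℕ in atTop, C / n < c₀ - b₀ :=
    (tendsto_const_div_atTop_nhds_zero_nat C).eventually
      (eventually_lt_nhds (by linarith))
  have hev3 : ∀ᶠ n : ℕ in atTop, r + 1 ≤ n := Filter.eventually_ge_atTop (r + 1)
  apply Filter.limsup_le_of_le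
  · isBoundedDefault
  filter_upwards [hev1, hev2, hev3] with n h1 h2 h3
  apply EReal.coe_le_coe_iff.2
  have hnr : 0 < n - r := by omega
  have hkey := key n (by omega)
  set s1 : ℕ := maxSep Fi A n ε univ with hs1
  set s2 : ℕ := maxSep Fj B (n - r) ε univ with hs2
  have hs2pos : 1 ≤ s2 := one_le_maxSep Fj B (n - r) hε
  have h1' : Real.log s2 / ((n - r : ℕ) : ℝ) < b₀ := by
    have := h1
    simp only [hv] at this
    exact EReal.coe_lt_coe_iff.1 this
  have hlogmul : Real.log ((s2 * T.card ^ r : ℕ) : ℝ)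
      = Real.log s2 + (r : ℝ) * Real.log T.card := by
    push_cast
    rw [Real.log_mul (by positivity) (by positivity), Real.log_pow]
  have hlog1 : Real.log s1 ≤ Real.log s2 + (r : ℝ) * Real.log T.card := by
    rw [← hlogmul]
    exact log_nat_mono hkey
  have hlogT : 0 ≤ Real.log T.card := Real.log_natCast_nonneg _
  have hn0 : (0 : ℝ) < n := by exact_mod_cast (by omega : 0 < n)
  have hnrn : ((n - r : ℕ) : ℝ) ≤ (n : ℝ) := by exact_mod_cast Nat.sub_le n r
  have hnr0 : (0 : ℝ) < ((n - r : ℕ) : ℝ) := by exact_mod_cast hnr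
  calc Real.log s1 / n ≤ (Real.log s2 + (r : ℝ) * Real.log T.card) / n := by
        rw [div_eq_mul_inv, div_eq_mul_inv]
        exact mul_le_mul_of_nonneg_right hlog1 (inv_nonneg.2 hn0.le)
    _ = Real.log s2 / n + (r : ℝ) * Real.log T.card / n := add_div _ _ _
    _ ≤ Real.log s2 / ((n - r : ℕ) : ℝ) + C / n := by
        apply add_le_add
        · exact div_le_div_of_nonneg_left (Real.log_natCast_nonneg _) hnr0 hnrn
        · rw [div_eq_mul_inv, div_eq_mul_inv]
          apply mul_le_mul_of_nonneg_right _ (inv_nonneg.2 hn0.le)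
          apply mul_le_mul_of_nonneg_right _ hlogT
          exact_mod_cast hrd
    _ ≤ c₀ := by linarith

end MainLemmas


/-- For an equicontinuous sequence of surjective maps, `h_A(f_{i,∞}) ≥ h_A(f_{j,∞})`
for `i ≤ j` and every sequence `A`; consequently `h*(f_{i,∞}) = h*(f_{j,∞})`. -/
theorem sepEnt_shift_of_surjective {X : Type*} [MetricSpace X] [CompactSpace X]
    (f : ℕ → X → X) (hf : ∀ n, Continuous (f n)) (hequi : Equicontinuous f)
    (hsurj : ∀ n, Function.Surjective (f n)) (i j : ℕ) (hij : i ≤ j) :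
    (∀ A : ℕ → ℕ, StrictMono A →
        sepEnt (fun n => f (j + n)) A univ ≤ sepEnt (fun n => f (i + n)) A univ) ∧
      supSeqEnt (fun n => f (i + n)) = supSeqEnt (fun n => f (j + n)) := by
  have part1 : ∀ (A : ℕ → ℕ) (j' : ℕ), i ≤ j' →
      sepEnt (fun n => f (j' + n)) A univ ≤ sepEnt (fun n => f (i + n)) A univ := by
    intro A j' hj'
    induction j', hj' using Nat.le_induction with
    | base => exact le_rfl
    | succ m hm ih => exact le_trans (sepEnt_shift_one f hequi hsurj m A) ih
  refine ⟨fun A _ => part1 A j hij, ?_⟩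
  rcases isEmpty_or_nonempty X with hX | hX
  · rw [supSeqEnt_of_isEmpty, supSeqEnt_of_isEmpty]
  · apply le_antisymm
    · exact iSup_le fun A => sepEnt_le_supSeqEnt_shift f i j hij A.1 A.2
    · exact iSup_le fun A => le_trans (part1 A.1 j hij)
        (le_iSup (fun A' : {A : ℕ → ℕ // StrictMono A} =>
          sepEnt (fun n => f (i + n)) A'.1 univ) A)
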